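/- For every k ≥ 1 there exists a continuous map f : S¹ → ℝ^{2k+1} with f(−z) = −f(z) for all z ∈ S¹, such that every finite subset X ⊆ S¹ for which 0 lies in the convex hull of f(X) has diameter at least π − π/(2k+1). -/

import Mathlib

open Metric

/-- The arc-length metric on the unit circle in `ℂ`: for unit complex numbers `z, w`
we have `circleDist z (exp (θ * I) * z) = |θ|` whenever `|θ| ≤ π`. -/
noncomputable def circleDist (z w : ℂ) : ℝ := |Complex.arg (w / z)|

namespace Stmt4Aux
open Real Complex

lemma arccos_anti {x y : ℝ} (h : x ≤ y) : Real.arccos y ≤ Real.arccos x := by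
  simp only [Real.arccos]
  have := Real.monotone_arcsin h
  linarith

/-- reduce an angle mod 2π into [-ε, ε] given a cosine bound -/
lemma angle_reduce {u ε : ℝ} (hε0 : 0 ≤ ε) (hεπ : ε ≤ π) (h : Real.cos ε ≤ Real.cos u) :
    ∃ (t : ℤ) (u' : ℝ), |u'| ≤ ε ∧ u = u' + t * (2 * π) := by
  refine ⟨round (u / (2 * π)), u - round (u / (2 * π)) * (2 * π), ?_, by ring⟩
  set t : ℤ := round (u / (2 * π))
  set u' : ℝ := u - t * (2 * π)
  have hcos : Real.cos u' = Real.cos u := by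
    have : u = u' + t * (2 * π) := by ring
    rw [this, Real.cos_add_int_mul_two_pi]
  have habs : |u'| ≤ π := by
    have h2π : (0:ℝ) < 2 * π := by positivity
    have h1 := abs_sub_round (u / (2 * π))
    have h2 : |u / (2 * π) - t| * (2 * π) ≤ (1/2) * (2*π) := by
      apply mul_le_mul_of_nonneg_right h1 h2π.le
    have hu' : u' = (u / (2*π) - t) * (2*π) := by simp only [u']; field_simp
    calc |u'| = |u / (2*π) - t| * |2*π| := by rw [hu', abs_mul]
      _ = |u / (2*π) - t| * (2*π) := by rw [abs_of_pos h2π]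
      _ ≤ (1/2) * (2*π) := h2
      _ = π := by ring
  have h1 : |u'| = Real.arccos (Real.cos u') := by
    rw [← Real.cos_abs, Real.arccos_cos (abs_nonneg _) habs]
  rw [h1, hcos]
  calc Real.arccos (Real.cos u) ≤ Real.arccos (Real.cos ε) := arccos_anti h
    _ = ε := Real.arccos_cos hε0 hεπ

lemma cos_le_of_mem {c u : ℝ} (hc0 : 0 ≤ c) (h1 : c ≤ u) (h2 : u ≤ 2 * π - c) :
    Real.cos u ≤ Real.cos c := by
  rcases le_total u π with h | h
  · exact Real.cos_le_cos_of_nonneg_of_le_pi hc0 h h1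
  · rw [← Real.cos_two_pi_sub]
    exact Real.cos_le_cos_of_nonneg_of_le_pi hc0 (by linarith) (by linarith)

/-- angular grid point -/
noncomputable def gridPt (n : ℕ) (j : ℤ) : ℂ :=
  Complex.exp ((((j : ℝ) * Real.pi / (n : ℝ) : ℝ) : ℂ) * Complex.I)

lemma gridPt_congr {n : ℕ} (hn : 0 < n) {j j' : ℤ} (h : (2 * (n:ℤ)) ∣ (j - j')) :
    gridPt n j = gridPt n j' := by
  obtain ⟨t, ht⟩ := h
  have hnR : (n:ℝ) ≠ 0 := Nat.cast_ne_zero.mpr hn.ne'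
  have hj : (j:ℝ) * π / n = (j':ℝ) * π / n + t * (2 * π) := by
    have : (j:ℝ) = j' + 2 * n * t := by
      have : j = j' + 2 * n * t := by linarith
      exact_mod_cast congrArg (Int.cast : ℤ → ℝ) this
    rw [this]; field_simp
  unfold gridPt
  rw [hj, Complex.ofReal_add, add_mul, Complex.exp_add]
  have : ((((t:ℝ) * (2 * π)) : ℝ) : ℂ) * Complex.I = (t : ℂ) * (2 * π * Complex.I) := by
    push_cast; ring
  rw [this, Complex.exp_int_mul_two_pi_mul_I, mul_one]

lemma gridPt_add_n {n : ℕ} (hn : 0 < n) (j : ℤ) : gridPt n (j + n) = -gridPt n j := by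
  have hnR : (n:ℝ) ≠ 0 := Nat.cast_ne_zero.mpr hn.ne'
  unfold gridPt
  have hj : ((j + (n:ℤ) : ℤ):ℝ) * π / n = (j:ℝ) * π / n + π := by push_cast; field_simp
  rw [hj, Complex.ofReal_add, add_mul, Complex.exp_add, Complex.exp_pi_mul_I]
  ring

lemma re_mul_conj_exp (θ α : ℝ) :
    (Complex.exp ((θ:ℂ) * Complex.I) * (starRingEnd ℂ) (Complex.exp ((α:ℂ) * Complex.I))).re
      = Real.cos (θ - α) := by
  have h1 : (starRingEnd ℂ) (Complex.exp ((α:ℂ) * Complex.I))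
      = Complex.exp (((-α : ℝ):ℂ) * Complex.I) := by
    rw [← Complex.exp_conj]
    congr 1
    simp [Complex.conj_I]
  rw [h1, ← Complex.exp_add]
  have : (θ:ℂ) * Complex.I + ((-α : ℝ):ℂ) * Complex.I = ((θ - α : ℝ) : ℂ) * Complex.I := by
    push_cast; ring
  rw [this, Complex.exp_ofReal_mul_I_re]

lemma abs_arg_eq {w : ℂ} (hw : ‖w‖ = 1) : |Complex.arg w| = Real.arccos w.re := by
  have hw0 : w ≠ 0 := by intro h; rw [h] at hw; simp at hw
  have h1 : Real.cos (Complex.arg w) = w.re := by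
    rw [Complex.cos_arg hw0, hw, div_one]
  have h2 : |Complex.arg w| ≤ π :=
    abs_le.mpr ⟨by linarith [Complex.neg_pi_lt_arg w], Complex.arg_le_pi w⟩
  rw [← h1, ← Real.cos_abs, Real.arccos_cos (abs_nonneg _) h2]

lemma circleDist_eq {x y : ℂ} (hx : ‖x‖ = 1) (hy : ‖y‖ = 1) :
    circleDist x y = Real.arccos ((y * (starRingEnd ℂ) x).re) := by
  have hxinv : (starRingEnd ℂ) x = x⁻¹ := by
    have h1 : (starRingEnd ℂ) x * x = 1 := by
      rw [mul_comm, Complex.mul_conj]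
      rw [Complex.normSq_eq_norm_sq, hx]
      norm_num
    exact eq_inv_of_mul_eq_one_left h1
  have hyx : y / x = y * (starRingEnd ℂ) x := by rw [div_eq_mul_inv, hxinv]
  have habs : ‖y / x‖ = 1 := by
    rw [norm_div, hx, hy]; norm_num
  rw [circleDist, abs_arg_eq habs, hyx]

noncomputable def bmp (n : ℕ) (j : ℤ) (z : ℂ) : ℝ :=
  max 0 (1 - ((n : ℝ) / Real.pi) * Real.arccos ((z * (starRingEnd ℂ) (gridPt n j)).re))

noncomputable def mapF (n : ℕ) (z : ℂ) : EuclideanSpace ℝ (Fin n) :=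
  WithLp.toLp 2 (fun i => bmp n i z - bmp n ((i : ℤ) + n) z)

lemma bmp_exp (n : ℕ) (j : ℤ) (θ : ℝ) :
    bmp n j (Complex.exp ((θ:ℂ) * Complex.I))
      = max 0 (1 - ((n:ℝ) / π) * Real.arccos (Real.cos (θ - j * π / n))) := by
  unfold bmp gridPt
  rw [re_mul_conj_exp]

lemma bmp_eval {n : ℕ} (hn : 3 ≤ n) (m j : ℤ) {δ : ℝ} (hδ0 : 0 ≤ δ) (hδ1 : δ < π / n) :
    bmp n j (Complex.exp (((m * π / n + δ : ℝ) : ℂ) * Complex.I))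
      = if (m - j) % (2*(n:ℤ)) = 0 then 1 - n * δ / π
        else if (m - j) % (2*(n:ℤ)) = 2*n - 1 then n * δ / π else 0 := by
  have hπ : (0:ℝ) < π := Real.pi_pos
  have hn0 : (0:ℝ) < (n:ℝ) := by exact_mod_cast Nat.lt_of_lt_of_le (by norm_num) hn
  have h2n : (0:ℤ) < 2 * n := by positivity
  have hπn : 0 < π / n := by positivity
  have hn1 : (1:ℝ) ≤ (n:ℝ) := by exact_mod_cast (by omega : 1 ≤ n)
  have hπnπ : π / n ≤ π := by
    rw [div_le_iff₀ hn0]; nlinarith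
  rw [bmp_exp]
  set e : ℤ := (m - j) % (2*(n:ℤ)) with he
  have he0 : 0 ≤ e := Int.emod_nonneg _ (by omega)
  have he2 : e < 2*n := Int.emod_lt_of_pos _ h2n
  obtain ⟨t, ht⟩ : ∃ t : ℤ, m - j = 2*n*t + e := by
    exact ⟨(m - j) / (2*n), by rw [he]; exact (Int.mul_ediv_add_emod _ _).symm⟩
  have harg : (m * π / n + δ) - j * π / n = (δ + e * π / n) + t * (2 * π) := by
    have hmj : ((m:ℝ) - j) = 2*n*t + e := by exact_mod_cast congrArg (Int.cast : ℤ → ℝ) ht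
    field_simp
    nlinarith [hmj]
  rw [harg, Real.cos_add_int_mul_two_pi]
  rcases eq_or_ne e 0 with h0 | h0
  · rw [if_pos h0]
    have hz : ((e:ℝ) * π / n) = 0 := by rw [h0]; simp
    rw [hz, add_zero, Real.arccos_cos hδ0 (le_trans hδ1.le hπnπ)]
    have hb : (n:ℝ)/π * δ ≤ 1 := by
      rw [div_mul_eq_mul_div, div_le_one hπ]
      have := mul_lt_mul_of_pos_left hδ1 hn0
      rw [mul_div_cancel₀ _ hn0.ne'] at this
      linarith
    rw [max_eq_right (by linarith)]
    ring
  · rw [if_neg h0]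
    rcases eq_or_ne e (2*n-1) with h1 | h1
    · rw [if_pos h1]
      have heR : ((e:ℝ)) = 2*(n:ℝ) - 1 := by
        have := congrArg (Int.cast : ℤ → ℝ) h1; push_cast at this; linarith
      have harg2 : δ + (e:ℝ)*π/n = (δ - π/n) + (1:ℤ)*(2*π) := by
        rw [heR]; push_cast; field_simp; ring
      rw [harg2, Real.cos_add_int_mul_two_pi]
      rw [show δ - π/n = -(π/n - δ) by ring, Real.cos_neg]
      rw [Real.arccos_cos (by linarith) (by linarith)]
      have hv : 1 - (n:ℝ)/π * (π/n - δ) = n*δ/π := by field_simp; ring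
      rw [hv, max_eq_right (by positivity)]
    · rw [if_neg h1]
      have he1 : (1:ℝ) ≤ (e:ℝ) := by exact_mod_cast (by omega : (1:ℤ) ≤ e)
      have he22 : ((e:ℝ)) ≤ 2*(n:ℝ) - 2 := by
        have h' : e ≤ 2*(n:ℤ) - 2 := by omega
        have h'' : ((e:ℝ)) ≤ ((2*(n:ℤ)-2 : ℤ) : ℝ) := by exact_mod_cast h'
        push_cast at h''; linarith
      have h5 : (e:ℝ)*π/n = (e:ℝ)*(π/n) := by ring
      have hu1 : π/n ≤ δ + (e:ℝ)*π/n := by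
        have := mul_le_mul_of_nonneg_right he1 hπn.le
        rw [one_mul] at this; linarith [h5 ▸ this]
      have hu2 : δ + (e:ℝ)*π/n ≤ 2*π - π/n := by
        have h6 : (2*(n:ℝ)-2)*(π/n) = 2*π - 2*(π/n) := by field_simp
        have h7 := mul_le_mul_of_nonneg_right he22 hπn.le
        rw [h6] at h7; linarith [h5 ▸ h7]
      have hcos := cos_le_of_mem hπn.le hu1 hu2
      have harc : π/n ≤ Real.arccos (Real.cos (δ + (e:ℝ)*π/n)) := by
        calc π/n = Real.arccos (Real.cos (π/n)) := (Real.arccos_cos hπn.le hπnπ).symm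
          _ ≤ _ := arccos_anti hcos
      have hle : 1 - (n:ℝ)/π * Real.arccos (Real.cos (δ + (e:ℝ)*π/n)) ≤ 0 := by
        have h3 : (n:ℝ)/π * (π/n) ≤ (n:ℝ)/π * Real.arccos (Real.cos (δ + (e:ℝ)*π/n)) :=
          mul_le_mul_of_nonneg_left harc (by positivity)
        have h4 : (n:ℝ)/π * (π/n) = 1 := by field_simp
        linarith
      exact max_eq_left hle

lemma re_mul_conj_grid (n : ℕ) (θ : ℝ) (j : ℤ) :
    (Complex.exp ((θ:ℂ) * Complex.I) * (starRingEnd ℂ) (gridPt n j)).re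
      = Real.cos (θ - (j:ℝ) * π / n) := by
  unfold gridPt
  exact re_mul_conj_exp θ _

def NearP (n : ℕ) (X : Finset ℂ) (j : ℤ) : Prop :=
  ∃ y ∈ X, Real.arccos ((y * (starRingEnd ℂ) (gridPt n j)).re) ≤ Real.pi / (2*n)

open Classical in
noncomputable def wgt (n : ℕ) (P : ℤ → Prop) (j : ℤ) : ℝ :=
  if P (j % (2*n)) then 1
  else if P (j % (2*n) + n) then -1
  else if j % (2*n) < n then 1 else -1

lemma wgt_mem (n : ℕ) (P : ℤ → Prop) (j : ℤ) : wgt n P j = 1 ∨ wgt n P j = -1 := by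
  unfold wgt; split_ifs <;> simp

lemma wgt_congr (n : ℕ) (P : ℤ → Prop) {j j' : ℤ} (h : j % (2*(n:ℤ)) = j' % (2*(n:ℤ))) :
    wgt n P j = wgt n P j' := by
  unfold wgt; rw [h]

section
variable {n : ℕ} {P : ℤ → Prop}

lemma wgt_one (hPc : ∀ j j' : ℤ, j % (2*(n:ℤ)) = j' % (2*(n:ℤ)) → (P j ↔ P j'))
    {j : ℤ} (hj : P j) : wgt n P j = 1 := by
  have h : (j % (2*(n:ℤ))) % (2*(n:ℤ)) = j % (2*(n:ℤ)) := Int.emod_emod_of_dvd _ dvd_rfl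
  have hPe : P (j % (2*(n:ℤ))) := (hPc _ _ h).mpr hj
  unfold wgt; rw [if_pos hPe]

lemma wgt_anti (hn : 3 ≤ n)
    (hPc : ∀ j j' : ℤ, j % (2*(n:ℤ)) = j' % (2*(n:ℤ)) → (P j ↔ P j'))
    (hK : ∀ j : ℤ, ¬(P j ∧ P (j + n))) (j : ℤ) :
    wgt n P (j + n) = - wgt n P j := by
  have h2n : (0:ℤ) < 2*n := by omega
  set e : ℤ := j % (2*(n:ℤ)) with he
  have he0 : 0 ≤ e := Int.emod_nonneg _ (by omega)
  have he2 : e < 2*n := Int.emod_lt_of_pos _ h2n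
  have heself : e % (2*(n:ℤ)) = e := Int.emod_emod_of_dvd _ dvd_rfl
  have hadd : (j + n) % (2*(n:ℤ)) = (e + n) % (2*(n:ℤ)) := by
    conv_lhs => rw [Int.add_emod, ← he]
    conv_rhs => rw [Int.add_emod, heself]
  rcases lt_or_ge e n with hlt | hge
  · have he' : (j + n) % (2*(n:ℤ)) = e + n := by
      rw [hadd, Int.emod_eq_of_lt (by omega) (by omega)]
    have hiff : P (e + n + n) ↔ P e := by
      apply hPc
      rw [show e + (n:ℤ) + n = e + 2*(n:ℤ)*1 by ring, Int.add_mul_emod_self_left, heself]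
    unfold wgt
    rw [← he, he']
    by_cases hpe : P e <;> by_cases hpen : P (e + n)
    · exact absurd ⟨hpe, hpen⟩ (hK e)
    · simp only [hiff, hpe, hpen, if_true, if_false]; try norm_num
    · simp only [hiff, hpe, hpen, if_true, if_false]; try norm_num
    · simp only [hiff, hpe, hpen, if_true, if_false,
        if_neg (show ¬ (e + (n:ℤ) < n) by omega), if_pos hlt]
      try norm_num
  · have he' : (j + n) % (2*(n:ℤ)) = e - n := by
      rw [hadd, show e + (n:ℤ) = (e - n) + (2*n)*1 by ring, Int.add_mul_emod_self_left,
        Int.emod_eq_of_lt (by omega) (by omega)]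
    have hsub : e - (n:ℤ) + n = e := by ring
    have hiff2 : P (e + n) ↔ P (e - n) := by
      apply hPc
      rw [show e + (n:ℤ) = (e - n) + (2*n)*1 by ring, Int.add_mul_emod_self_left]
    unfold wgt
    rw [← he, he', hsub]
    by_cases hpe : P e <;> by_cases hpen : P (e - n)
    · exact absurd ⟨hpen, hsub.symm ▸ hpe⟩ (hK (e - n))
    · simp only [hiff2, hpe, hpen, if_true, if_false]; try norm_num
    · simp only [hiff2, hpe, hpen, if_true, if_false]; try norm_num
    · simp only [hiff2, hpe, hpen, if_true, if_false,
        if_neg (show ¬ (e < (n:ℤ)) by omega),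
        if_pos (show e - (n:ℤ) < n by omega)]
      try norm_num

-- helpers for mod-2n case analysis
lemma n_mul_ne_one (hn : 3 ≤ n) (t : ℤ) : (n:ℤ) * t ≠ 1 := by
  intro h
  have h3 : (3:ℤ) ≤ n := by exact_mod_cast hn
  rcases le_or_gt t 0 with ht | ht
  · nlinarith
  · have : 1 ≤ t := ht
    nlinarith

lemma n_parity (hn : 3 ≤ n) {c d : ℤ} (h : (n:ℤ) * (2*c) = n * (2*d+1)) : False := by
  have hn0 : (n:ℤ) ≠ 0 := by omega
  have := mul_left_cancel₀ hn0 h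
  omega

lemma dvd_n_cases (hn : 3 ≤ n) {A : ℤ} (h : (n:ℤ) ∣ A) :
    (A % (2*(n:ℤ)) = 0 ∧ (A - n) % (2*(n:ℤ)) ≠ 0 ∧ (A - n) % (2*(n:ℤ)) ≠ 2*n - 1
      ∧ A % (2*(n:ℤ)) ≠ 2*n - 1)
    ∨ ((A - n) % (2*(n:ℤ)) = 0 ∧ A % (2*(n:ℤ)) ≠ 0 ∧ A % (2*(n:ℤ)) ≠ 2*n - 1
      ∧ (A - n) % (2*(n:ℤ)) ≠ 2*n - 1) := by
  have h2n : (0:ℤ) < 2*n := by omega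
  have hone : ∀ B : ℤ, B % (2*(n:ℤ)) = 2*n - 1 → (2*(n:ℤ)) ∣ (B + 1) := by
    intro B hB
    have := Int.mul_ediv_add_emod B (2*n)
    exact ⟨B / (2*n) + 1, by linarith⟩
  obtain ⟨s, hs⟩ := h
  rcases Int.even_or_odd s with ⟨c, hc⟩ | ⟨c, hc⟩
  · left
    have hA : A = (n:ℤ) * (2*c) := by rw [hs, hc]; try ring
    refine ⟨Int.emod_eq_zero_of_dvd ⟨c, by rw [hA]; ring⟩, ?_, ?_, ?_⟩
    · intro hmod
      obtain ⟨d, hd⟩ := Int.dvd_of_emod_eq_zero hmod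
      exact n_parity hn (show (n:ℤ)*(2*d) = n*(2*(c-1) + 1) by linarith)
    · intro hmod
      obtain ⟨d, hd⟩ := hone _ hmod
      exact n_mul_ne_one hn (2*d - 2*c + 1) (by linarith)
    · intro hmod
      obtain ⟨d, hd⟩ := hone _ hmod
      exact n_mul_ne_one hn (2*d - 2*c) (by linarith)
  · right
    have hA : A = (n:ℤ) * (2*c+1) := by rw [hs, hc]; try ring
    have hdvd : (2*(n:ℤ)) ∣ (A - n) := ⟨c, by linarith⟩
    refine ⟨Int.emod_eq_zero_of_dvd hdvd, ?_, ?_, ?_⟩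
    · intro hmod
      obtain ⟨d, hd⟩ := Int.dvd_of_emod_eq_zero hmod
      exact n_parity hn (show (n:ℤ)*(2*d) = n*(2*c + 1) by linarith)
    · intro hmod
      obtain ⟨d, hd⟩ := hone _ hmod
      exact n_mul_ne_one hn (2*d - 2*c - 1) (by linarith)
    · intro hmod
      obtain ⟨d, hd⟩ := hone _ hmod
      exact n_mul_ne_one hn (2*d - 2*c) (by linarith)

lemma dvd_n_cases' (hn : 3 ≤ n) {A : ℤ} (h : (n:ℤ) ∣ (A + 1)) :
    (A % (2*(n:ℤ)) = 2*n - 1 ∧ (A - n) % (2*(n:ℤ)) ≠ 0 ∧ (A - n) % (2*(n:ℤ)) ≠ 2*n - 1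
      ∧ A % (2*(n:ℤ)) ≠ 0 ∧ (A + 1) % (2*(n:ℤ)) = 0)
    ∨ ((A - n) % (2*(n:ℤ)) = 2*n - 1 ∧ A % (2*(n:ℤ)) ≠ 0 ∧ A % (2*(n:ℤ)) ≠ 2*n - 1
      ∧ (A - n) % (2*(n:ℤ)) ≠ 0 ∧ (A + 1 - n) % (2*(n:ℤ)) = 0) := by
  have h2n : (0:ℤ) < 2*n := by omega
  have h3 : (3:ℤ) ≤ n := by exact_mod_cast hn
  have hone : ∀ B : ℤ, (2*(n:ℤ)) ∣ (B + 1) → B % (2*(n:ℤ)) = 2*n - 1 := by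
    intro B ⟨c, hc⟩
    have : B = (2*(n:ℤ) - 1) + (2*n)*(c - 1) := by linarith
    rw [this, Int.add_mul_emod_self_left, Int.emod_eq_of_lt (by omega) (by omega)]
  have hone' : ∀ B : ℤ, B % (2*(n:ℤ)) = 2*n - 1 → (2*(n:ℤ)) ∣ (B + 1) := by
    intro B hB
    have := Int.mul_ediv_add_emod B (2*n)
    exact ⟨B / (2*n) + 1, by linarith⟩
  obtain ⟨s, hs⟩ := h
  rcases Int.even_or_odd s with ⟨c, hc⟩ | ⟨c, hc⟩
  · left
    have hA : A + 1 = (n:ℤ) * (2*c) := by rw [hs, hc]; try ring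
    have hdvd1 : (2*(n:ℤ)) ∣ (A + 1) := ⟨c, by linarith⟩
    refine ⟨hone A hdvd1, ?_, ?_, ?_, Int.emod_eq_zero_of_dvd hdvd1⟩
    · intro hmod
      obtain ⟨d, hd⟩ := Int.dvd_of_emod_eq_zero hmod
      exact n_mul_ne_one hn (2*c - 2*d - 1) (by linarith)
    · intro hmod
      obtain ⟨d, hd⟩ := hone' _ hmod
      exact n_parity hn (show (n:ℤ)*(2*d) = n*(2*(c-1) + 1) by linarith)
    · intro hmod
      obtain ⟨d, hd⟩ := Int.dvd_of_emod_eq_zero hmod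
      exact n_mul_ne_one hn (2*c - 2*d) (by linarith)
  · right
    have hA : A + 1 = (n:ℤ) * (2*c+1) := by rw [hs, hc]; try ring
    have hdvd1 : (2*(n:ℤ)) ∣ (A - n + 1) := ⟨c, by linarith⟩
    have hdvd2 : (2*(n:ℤ)) ∣ (A + 1 - n) := ⟨c, by linarith⟩
    refine ⟨hone _ hdvd1, ?_, ?_, ?_, Int.emod_eq_zero_of_dvd hdvd2⟩
    · intro hmod
      obtain ⟨d, hd⟩ := Int.dvd_of_emod_eq_zero hmod
      exact n_mul_ne_one hn (2*c + 1 - 2*d) (by linarith)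
    · intro hmod
      obtain ⟨d, hd⟩ := hone' _ hmod
      exact n_parity hn (show (n:ℤ)*(2*d) = n*(2*c + 1) by linarith)
    · intro hmod
      obtain ⟨d, hd⟩ := Int.dvd_of_emod_eq_zero hmod
      exact n_mul_ne_one hn (2*c - 2*d) (by linarith)

lemma not_dvd_cases (hn : 3 ≤ n) {A : ℤ} (h1 : ¬ (n:ℤ) ∣ A) (h2 : ¬ (n:ℤ) ∣ (A + 1)) :
    A % (2*(n:ℤ)) ≠ 0 ∧ A % (2*(n:ℤ)) ≠ 2*n - 1
      ∧ (A - n) % (2*(n:ℤ)) ≠ 0 ∧ (A - n) % (2*(n:ℤ)) ≠ 2*n - 1 := by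
  have h2n : (0:ℤ) < 2*n := by omega
  have hone' : ∀ B : ℤ, B % (2*(n:ℤ)) = 2*n - 1 → (2*(n:ℤ)) ∣ (B + 1) := by
    intro B hB
    have := Int.mul_ediv_add_emod B (2*n)
    exact ⟨B / (2*n) + 1, by linarith⟩
  refine ⟨?_, ?_, ?_, ?_⟩
  · intro hmod
    obtain ⟨d, hd⟩ := Int.dvd_of_emod_eq_zero hmod
    exact h1 ⟨2*d, by linarith⟩
  · intro hmod
    obtain ⟨d, hd⟩ := hone' _ hmod
    exact h2 ⟨2*d, by linarith⟩
  · intro hmod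
    obtain ⟨d, hd⟩ := Int.dvd_of_emod_eq_zero hmod
    exact h1 ⟨2*d + 1, by linarith⟩
  · intro hmod
    obtain ⟨d, hd⟩ := hone' _ hmod
    exact h2 ⟨2*d + 1, by linarith⟩
end

end Stmt4Aux

namespace Stmt4Aux
open Real Complex

set_option maxHeartbeats 2000000 in
lemma main (n : ℕ) (hn : 3 ≤ n) :
    ∃ f : ℂ → EuclideanSpace ℝ (Fin n),
      ContinuousOn f (sphere (0 : ℂ) 1) ∧
      (∀ z ∈ sphere (0 : ℂ) 1, f (-z) = -f z) ∧
      ∀ X : Finset ℂ, ↑X ⊆ sphere (0 : ℂ) 1 →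
        (0 : EuclideanSpace ℝ (Fin n)) ∈ convexHull ℝ (f '' ↑X) →
        ∃ x ∈ X, ∃ y ∈ X, Real.pi - Real.pi / n ≤ circleDist x y := by
  classical
  have hπ : (0:ℝ) < π := Real.pi_pos
  have hn0 : 0 < n := by omega
  have hnR : (0:ℝ) < (n:ℝ) := by exact_mod_cast hn0
  have hn1 : (1:ℝ) ≤ (n:ℝ) := by exact_mod_cast (by omega : 1 ≤ n)
  have hπn : (0:ℝ) < π / n := by positivity
  have hπnπ : π / n ≤ π := by rw [div_le_iff₀ hnR]; nlinarith
  have h2nR : (0:ℝ) < 2 * (n:ℝ) := by positivity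
  have hhalf : π/(n:ℝ) - π/(2*n) = π/(2*n) := by field_simp; ring
  have hπ2nπ : π/(2*(n:ℝ)) ≤ π := by
    rw [div_le_iff₀ h2nR]; nlinarith
  have hbc : ∀ j : ℤ, Continuous (bmp n j) := by
    intro j
    apply continuous_const.max
    apply Continuous.sub continuous_const
    apply Continuous.mul continuous_const
    exact Real.continuous_arccos.comp (Complex.continuous_re.comp (continuous_mul_right _))
  refine ⟨mapF n, ?_, ?_, ?_⟩
  · refine Continuous.continuousOn ?_
    unfold mapF
    exact (PiLp.continuous_toLp 2 _).comp (continuous_pi fun i => ((hbc i).sub (hbc ((i:ℤ) + n))))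
  · -- oddness
    intro z _
    have hneg : ∀ (j : ℤ) (w : ℂ), bmp n j (-w) = bmp n (j + n) w := by
      intro j w
      have h1 : (-w) * (starRingEnd ℂ) (gridPt n j) = w * (starRingEnd ℂ) (gridPt n (j + n)) := by
        rw [gridPt_add_n hn0, map_neg]; ring
      unfold bmp
      rw [h1]
    have hper : ∀ (j : ℤ) (w : ℂ), bmp n (j + 2*n) w = bmp n j w := by
      intro j w
      unfold bmp
      rw [gridPt_congr hn0 (⟨1, by ring⟩ : (2*(n:ℤ)) ∣ (j + 2*n - j))]
    ext i
    have h2 : (-(mapF n z)) i = -(mapF n z i) := rfl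
    rw [h2]
    show bmp n i (-z) - bmp n ((i:ℤ) + n) (-z) = -(bmp n i z - bmp n ((i:ℤ) + n) z)
    rw [hneg, hneg]
    have h3 : ((i:ℤ) + n) + n = (i:ℤ) + 2*n := by ring
    rw [h3, hper]
    ring
  -- main combinatorial statement
  intro X hX h0
  by_contra hcon
  push_neg at hcon
  have habs : ∀ x ∈ X, ‖x‖ = 1 := by
    intro x hx
    have := hX hx
    rw [mem_sphere_zero_iff_norm] at this
    exact this
  have hrep : ∀ x ∈ X, x = Complex.exp ((x.arg : ℂ) * Complex.I) := by
    intro x hx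
    conv_lhs => rw [← Complex.norm_mul_exp_arg_mul_I x]
    rw [habs x hx]
    simp
  set P : ℤ → Prop := NearP n X with hP
  have hPc : ∀ j j' : ℤ, j % (2*(n:ℤ)) = j' % (2*(n:ℤ)) → (P j ↔ P j') := by
    intro j j' h
    have hdvd : (2*(n:ℤ)) ∣ (j - j') :=
      Int.dvd_of_emod_eq_zero (Int.emod_eq_emod_iff_emod_sub_eq_zero.mp h)
    have hgr : gridPt n j = gridPt n j' := gridPt_congr hn0 hdvd
    rw [hP]
    unfold NearP
    rw [hgr]
  have hK : ∀ j : ℤ, ¬(P j ∧ P (j + n)) := by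
    rw [hP]
    unfold NearP
    rintro j ⟨⟨y, hy, hyd⟩, ⟨z, hz, hzd⟩⟩
    have hyre : (y * (starRingEnd ℂ) (gridPt n j)).re = Real.cos (y.arg - (j:ℝ)*π/n) := by
      conv_lhs => rw [hrep y hy]
      exact re_mul_conj_grid n y.arg j
    have hzre : (z * (starRingEnd ℂ) (gridPt n (j+n))).re
        = Real.cos (z.arg - ((j + (n:ℤ) : ℤ):ℝ)*π/n) := by
      conv_lhs => rw [hrep z hz]
      exact re_mul_conj_grid n z.arg (j + n)
    have hcget : ∀ u : ℝ, Real.arccos (Real.cos u) ≤ π/(2*n) →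
        Real.cos (π/(2*n)) ≤ Real.cos u := by
      intro u hu
      calc Real.cos (π/(2*n))
          ≤ Real.cos (Real.arccos (Real.cos u)) :=
            Real.cos_le_cos_of_nonneg_of_le_pi (Real.arccos_nonneg _) hπ2nπ hu
        _ = Real.cos u := Real.cos_arccos (Real.neg_one_le_cos u) (Real.cos_le_one u)
    rw [hyre] at hyd
    rw [hzre] at hzd
    obtain ⟨t₁, u₁, hu₁, he₁⟩ := angle_reduce (by positivity) hπ2nπ (hcget _ hyd)
    obtain ⟨t₂, u₂, hu₂, he₂⟩ := angle_reduce (by positivity) hπ2nπ (hcget _ hzd)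
    have e3 : ((j + (n:ℤ) : ℤ):ℝ)*π/n = (j:ℝ)*π/n + π := by
      push_cast; field_simp
    have hψφ : z.arg - y.arg = (u₂ - u₁ + π) + ((t₂ - t₁ : ℤ):ℝ) * (2*π) := by
      have e1 : y.arg = u₁ + t₁*(2*π) + (j:ℝ)*π/n := by linarith
      have e2 : z.arg = u₂ + t₂*(2*π) + ((j:ℝ)*π/n + π) := by rw [← e3]; linarith
      rw [e1, e2]; push_cast; ring
    have hcosψφ : Real.cos (z.arg - y.arg) = - Real.cos (u₂ - u₁) := by
      rw [hψφ, Real.cos_add_int_mul_two_pi, Real.cos_add_pi]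
    have hs : |u₂ - u₁| ≤ π/n := by
      calc |u₂ - u₁| ≤ |u₂| + |u₁| := abs_sub _ _
        _ ≤ π/(2*n) + π/(2*n) := add_le_add hu₂ hu₁
        _ = π/n := by field_simp; ring
    have hcs : Real.cos (π/n) ≤ Real.cos (u₂ - u₁) := by
      rw [← Real.cos_abs (u₂ - u₁)]
      exact Real.cos_le_cos_of_nonneg_of_le_pi (abs_nonneg _) hπnπ hs
    have hyz : circleDist y z = Real.arccos ((z * (starRingEnd ℂ) y).re) :=
      circleDist_eq (habs y hy) (habs z hz)
    have hzyre : (z * (starRingEnd ℂ) y).re = Real.cos (z.arg - y.arg) := by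
      conv_lhs => rw [hrep z hz, hrep y hy]
      exact re_mul_conj_exp z.arg y.arg
    have hfinal : π - π/n ≤ circleDist y z := by
      rw [hyz, hzyre]
      calc π - π/n = Real.arccos (- Real.cos (π/n)) := by
            rw [Real.arccos_neg, Real.arccos_cos hπn.le hπnπ]
        _ ≤ Real.arccos (Real.cos (z.arg - y.arg)) := by
            apply arccos_anti
            rw [hcosψφ]
            linarith
    exact absurd hfinal (not_le.mpr (hcon y hy z hz))
  set v : EuclideanSpace ℝ (Fin n) := WithLp.toLp 2 (fun i => wgt n P (i : ℤ) : Fin n → ℝ) with hv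
  set φf : EuclideanSpace ℝ (Fin n) → ℝ := fun u => ∑ i : Fin n, v i * u i with hφf
  have hlin : IsLinearMap ℝ φf := by
    constructor
    · intro u w
      simp only [hφf, PiLp.add_apply, mul_add]
      rw [Finset.sum_add_distrib]
    · intro c u
      simp only [hφf, PiLp.smul_apply, smul_eq_mul, Finset.mul_sum]
      apply Finset.sum_congr rfl
      intros; ring
  have hFinEq : ∀ (i j : Fin n), (n:ℤ) ∣ ((i:ℤ) - (j:ℤ)) → i = j := by
    intro i j h
    obtain ⟨c, hc⟩ := h
    have h1 : ((i:ℤ)) < n := by exact_mod_cast i.2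
    have h2 : ((j:ℤ)) < n := by exact_mod_cast j.2
    have h3 : (0:ℤ) ≤ (i:ℤ) := by positivity
    have h4 : (0:ℤ) ≤ (j:ℤ) := by positivity
    have h5 : (3:ℤ) ≤ (n:ℤ) := by exact_mod_cast hn
    have hc0 : c = 0 := by
      rcases lt_trichotomy c 0 with h' | h' | h'
      · nlinarith
      · exact h'
      · nlinarith
    have : (i:ℤ) = (j:ℤ) := by rw [hc0] at hc; linarith
    exact Fin.ext (by exact_mod_cast this)
  have hpos : ∀ x ∈ X, 0 < φf (mapF n x) := by
    intro x hx
    obtain ⟨m, δ, hδ0, hδ1, hxe⟩ :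
        ∃ (m : ℤ) (δ : ℝ), 0 ≤ δ ∧ δ < π/n ∧
          x = Complex.exp (((m*π/n + δ : ℝ):ℂ) * Complex.I) := by
      refine ⟨⌊x.arg * n / π⌋, x.arg - ⌊x.arg * n / π⌋ * π / n, ?_, ?_, ?_⟩
      · have h1 : ((⌊x.arg * n / π⌋ : ℤ):ℝ) ≤ x.arg * n / π := Int.floor_le _
        have h2 := mul_le_mul_of_nonneg_right h1 hπn.le
        have h3 : (x.arg * n / π) * (π/n) = x.arg := by field_simp
        rw [h3] at h2
        have h4 : ((⌊x.arg * n / π⌋ : ℤ):ℝ) * (π/n) = ((⌊x.arg * n / π⌋ : ℤ):ℝ) * π / n := by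
          ring
        linarith [h4 ▸ h2]
      · have h1 : x.arg * n / π < ((⌊x.arg * n / π⌋ : ℤ):ℝ) + 1 := Int.lt_floor_add_one _
        have h2 := mul_lt_mul_of_pos_right h1 hπn
        have h3 : (x.arg * n / π) * (π/n) = x.arg := by field_simp
        rw [h3, add_mul, one_mul] at h2
        have h4 : ((⌊x.arg * n / π⌋ : ℤ):ℝ) * (π/n) = ((⌊x.arg * n / π⌋ : ℤ):ℝ) * π / n := by
          ring
        linarith [h4 ▸ h2]
      · rw [show ((⌊x.arg * n / π⌋ : ℤ):ℝ)*π/n + (x.arg - ((⌊x.arg * n / π⌋ : ℤ):ℝ) * π / n)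
            = x.arg by ring]
        exact hrep x hx
    have hB : ∀ j : ℤ, bmp n j x
        = (if (m - j) % (2*(n:ℤ)) = 0 then 1 - n*δ/π
           else if (m - j) % (2*(n:ℤ)) = 2*n - 1 then n*δ/π else 0) := by
      intro j
      rw [hxe]
      exact bmp_eval hn m j hδ0 hδ1
    set a : ℝ := n*δ/π with ha
    have ha0 : 0 ≤ a := by positivity
    have ha1 : a < 1 := by
      rw [ha, div_lt_one hπ]
      have := mul_lt_mul_of_pos_left hδ1 hnR
      rw [mul_div_cancel₀ _ hnR.ne'] at this
      linarith
    have hidx : ∀ q : ℤ, ∃ i : Fin n, (n:ℤ) ∣ (q - (i:ℤ)) := by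
      intro q
      have h1 : 0 ≤ q % (n:ℤ) := Int.emod_nonneg _ (by omega)
      have h2 : q % (n:ℤ) < n := Int.emod_lt_of_pos _ (by exact_mod_cast hn0)
      refine ⟨⟨(q % (n:ℤ)).toNat, by omega⟩, ?_⟩
      have h3 : (((⟨(q % (n:ℤ)).toNat, by omega⟩ : Fin n) : ℕ) : ℤ) = q % (n:ℤ) := by
        simp only [Fin.val_mk]
        exact Int.toNat_of_nonneg h1
      rw [h3]
      refine ⟨q / n, ?_⟩
      have := Int.mul_ediv_add_emod q n
      linarith
    obtain ⟨i₁, hi₁⟩ := hidx m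
    obtain ⟨i₂, hi₂⟩ := hidx (m+1)
    have hne : i₁ ≠ i₂ := by
      intro h
      rw [h] at hi₁
      obtain ⟨c1, hc1⟩ := hi₁
      obtain ⟨c2, hc2⟩ := hi₂
      exact n_mul_ne_one hn (c2 - c1) (by linarith)
    have hvi : ∀ i : Fin n, v i = wgt n P (i:ℤ) := fun i => rfl
    have hmapi : ∀ i : Fin n, mapF n x i = bmp n (i:ℤ) x - bmp n ((i:ℤ) + n) x := fun i => rfl
    have hT0 : ∀ i : Fin n, i ≠ i₁ → i ≠ i₂ → v i * mapF n x i = 0 := by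
      intro i h1 h2
      have hd1 : ¬ (n:ℤ) ∣ (m - (i:ℤ)) := by
        intro h
        apply h1
        apply hFinEq i i₁
        obtain ⟨c, hc⟩ := h
        obtain ⟨c', hc'⟩ := hi₁
        exact ⟨c' - c, by linarith⟩
      have hd2 : ¬ (n:ℤ) ∣ ((m - (i:ℤ)) + 1) := by
        intro h
        apply h2
        apply hFinEq i i₂
        obtain ⟨c, hc⟩ := h
        obtain ⟨c', hc'⟩ := hi₂
        exact ⟨c' - c, by linarith⟩
      obtain ⟨c1, c2, c3, c4⟩ := not_dvd_cases hn hd1 hd2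
      rw [hmapi, hB, hB, show m - ((i:ℤ) + n) = m - (i:ℤ) - n from by ring,
        if_neg c1, if_neg c2, if_neg c3, if_neg c4]
      ring
    have hT1 : v i₁ * mapF n x i₁ = wgt n P m * (1 - a) := by
      rw [hmapi, hB, hB, show m - ((i₁:ℤ) + n) = m - (i₁:ℤ) - n from by ring]
      rcases dvd_n_cases hn hi₁ with ⟨c1, c2, c3, c4⟩ | ⟨c1, c2, c3, c4⟩
      · rw [if_pos c1, if_neg c2, if_neg c3]
        have hw : wgt n P m = v i₁ := by
          rw [hvi]
          exact wgt_congr n P (Int.emod_eq_emod_iff_emod_sub_eq_zero.mpr c1)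
        rw [hw]; ring
      · rw [if_neg c2, if_neg c3, if_pos c1]
        have hw : wgt n P m = - v i₁ := by
          have h1 : wgt n P m = wgt n P ((i₁:ℤ) + n) := by
            apply wgt_congr
            apply Int.emod_eq_emod_iff_emod_sub_eq_zero.mpr
            rw [show m - ((i₁:ℤ) + n) = m - (i₁:ℤ) - n from by ring]
            exact c1
          rw [h1, wgt_anti hn hPc hK, hvi]
        rw [hw]; ring
    have hT2 : v i₂ * mapF n x i₂ = wgt n P (m+1) * a := by
      have hi₂' : (n:ℤ) ∣ ((m - (i₂:ℤ)) + 1) := by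
        obtain ⟨c, hc⟩ := hi₂
        exact ⟨c, by linarith⟩
      rw [hmapi, hB, hB, show m - ((i₂:ℤ) + n) = m - (i₂:ℤ) - n from by ring]
      rcases dvd_n_cases' hn hi₂' with ⟨c1, c2, c3, c4, c5⟩ | ⟨c1, c2, c3, c4, c5⟩
      · rw [if_neg c4, if_pos c1, if_neg c2, if_neg c3]
        have hw : wgt n P (m+1) = v i₂ := by
          rw [hvi]
          apply wgt_congr
          apply Int.emod_eq_emod_iff_emod_sub_eq_zero.mpr
          rw [show (m+1) - (i₂:ℤ) = (m - (i₂:ℤ)) + 1 from by ring]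
          exact c5
        rw [hw]; ring
      · rw [if_neg c2, if_neg c3, if_neg c4, if_pos c1]
        have hw : wgt n P (m+1) = - v i₂ := by
          have h1 : wgt n P (m+1) = wgt n P ((i₂:ℤ) + n) := by
            apply wgt_congr
            apply Int.emod_eq_emod_iff_emod_sub_eq_zero.mpr
            rw [show (m+1) - ((i₂:ℤ) + n) = (m - (i₂:ℤ)) + 1 - n from by ring]
            exact c5
          rw [h1, wgt_anti hn hPc hK, hvi]
        rw [hw]; ring
    have hsum : φf (mapF n x) = v i₁ * mapF n x i₁ + v i₂ * mapF n x i₂ := by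
      have hz : ∀ i ∈ Finset.univ, i ∉ ({i₁, i₂} : Finset (Fin n)) → v i * mapF n x i = 0 := by
        intro i _ hi
        simp only [Finset.mem_insert, Finset.mem_singleton, not_or] at hi
        exact hT0 i hi.1 hi.2
      calc φf (mapF n x) = ∑ i : Fin n, v i * mapF n x i := rfl
        _ = ∑ i ∈ ({i₁, i₂} : Finset (Fin n)), v i * mapF n x i :=
            (Finset.sum_subset (Finset.subset_univ _) hz).symm
        _ = _ := Finset.sum_pair hne
    have hS : φf (mapF n x) = wgt n P m * (1 - a) + wgt n P (m+1) * a := by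
      rw [hsum, hT1, hT2]
    have hNear1 : δ ≤ π/(2*n) → P m := by
      intro h
      rw [hP]
      unfold NearP
      refine ⟨x, hx, ?_⟩
      have h1 : (x * (starRingEnd ℂ) (gridPt n m)).re
          = Real.cos ((m*π/n + δ) - (m:ℝ)*π/n) := by
        conv_lhs => rw [hxe]
        exact re_mul_conj_grid n _ m
      rw [h1, show ((m:ℝ)*π/n + δ) - (m:ℝ)*π/n = δ from by ring,
        Real.arccos_cos hδ0 (le_trans hδ1.le hπnπ)]
      exact h
    have hNear2 : π/n - δ ≤ π/(2*n) → P (m+1) := by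
      intro h
      rw [hP]
      unfold NearP
      refine ⟨x, hx, ?_⟩
      have h1 : (x * (starRingEnd ℂ) (gridPt n (m+1))).re
          = Real.cos ((m*π/n + δ) - ((m+1 : ℤ):ℝ)*π/n) := by
        conv_lhs => rw [hxe]
        exact re_mul_conj_grid n _ (m+1)
      have h2 : ((m:ℝ)*π/n + δ) - ((m+1 : ℤ):ℝ)*π/n = -(π/n - δ) := by
        push_cast; field_simp; ring
      rw [h1, h2, Real.cos_neg, Real.arccos_cos (by linarith) (by linarith)]
      exact h
    rcases lt_trichotomy δ (π/(2*n)) with hlt | heq | hgt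
    · have hw1 : wgt n P m = 1 := wgt_one hPc (hNear1 hlt.le)
      have ha2 : a < 1/2 := by
        rw [ha, div_lt_iff₀ hπ]
        have h6 := mul_lt_mul_of_pos_left hlt hnR
        have h7 : (n:ℝ) * (π/(2*n)) = π/2 := by field_simp
        rw [h7] at h6
        linarith
      rw [hS, hw1]
      rcases wgt_mem n P (m+1) with h | h <;> rw [h] <;> linarith
    · have hw1 : wgt n P m = 1 := wgt_one hPc (hNear1 heq.le)
      have hw2 : wgt n P (m+1) = 1 := wgt_one hPc (hNear2 (by rw [heq]; linarith)) 
      rw [hS, hw1, hw2]; linarith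
    · have hw2 : wgt n P (m+1) = 1 := wgt_one hPc (hNear2 (by linarith))
      have ha2 : 1/2 < a := by
        rw [ha, lt_div_iff₀ hπ]
        have h6 := mul_lt_mul_of_pos_left hgt hnR
        have h7 : (n:ℝ) * (π/(2*n)) = π/2 := by field_simp
        rw [h7] at h6
        linarith
      rw [hS, hw2]
      rcases wgt_mem n P m with h | h <;> rw [h] <;> linarith
  have hsubset : (mapF n '' ↑X) ⊆ {u : EuclideanSpace ℝ (Fin n) | (0:ℝ) < φf u} := by
    rintro u ⟨x, hx, rfl⟩
    exact hpos x hx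
  have h0' := convexHull_min hsubset (convex_halfSpace_gt hlin 0) h0
  simp only [Set.mem_setOf_eq] at h0'
  have hzero : φf 0 = 0 := by
    show (∑ i : Fin n, v i * (0 : EuclideanSpace ℝ (Fin n)) i) = 0
    apply Finset.sum_eq_zero
    intro i _
    rw [PiLp.zero_apply, mul_zero]
  rw [hzero] at h0'
  exact lt_irrefl 0 h0'

end Stmt4Aux

/-- Theorem 1.1, second part. For every `k ≥ 1` there is an odd
continuous map `f : S¹ → ℝ^{2k+1}` such that every finite subset `X ⊆ S¹` whose image's
convex hull contains `0` has diameter at least `π - π/(2k+1)`. -/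
theorem stmt4 (k : ℕ) (hk : 1 ≤ k) :
    ∃ f : ℂ → EuclideanSpace ℝ (Fin (2 * k + 1)),
      ContinuousOn f (sphere (0 : ℂ) 1) ∧
      (∀ z ∈ sphere (0 : ℂ) 1, f (-z) = -f z) ∧
      ∀ X : Finset ℂ, ↑X ⊆ sphere (0 : ℂ) 1 →
        (0 : EuclideanSpace ℝ (Fin (2 * k + 1))) ∈ convexHull ℝ (f '' ↑X) →
        ∃ x ∈ X, ∃ y ∈ X, Real.pi - Real.pi / (2 * k + 1) ≤ circleDist x y := by
  obtain ⟨f, h1, h2, h3⟩ := Stmt4Aux.main (2 * k + 1) (by omega)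
  refine ⟨f, h1, h2, ?_⟩
  intro X hX h0
  obtain ⟨x, hx, y, hy, hxy⟩ := h3 X hX h0
  refine ⟨x, hx, y, hy, ?_⟩
  have hc : (((2 * k + 1 : ℕ)) : ℝ) = 2 * (k:ℝ) + 1 := by push_cast; ring
  rw [← hc]
  exact hxy
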